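/- arXiv:1708.05343 — 2 statements merged into one kernel-verified Lean document; each statement's English description precedes it below -/
import Mathlib

section
/- Let (a_k)_{k≥0} be real numbers with a₀ ≠ 0, and suppose there exist A, R > 0 such that |a_k| ≤ A·R^k for all k ≥ 0. Define V(z) = Σ_{k≥0} a_k·z^k for |z| < 1/R, and let the polynomials {Pₙ} be defined by P₋₁ = 0, P₀ = 1 and the recursion x·Pₙ(x) = P_{n−1}(x) + Σ_{k=0}^{n} a_k·P_{n+1−k}(x) for n ≥ 0. Then for every compact set K ⊂ ℝ there exists r > 0 (independent of x ∈ K) such that for all z with |z| < r the series Σ_{n≥0} Pₙ(x)·zⁿ converges uniformly over x ∈ K, with sum equal to V(z)/(V(z) + z(z − x)). -/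
open MeasureTheory Filter

noncomputable section

set_option maxHeartbeats 4000000 in
/-- If `|a_k| ≤ A·R^k` with `a₀ ≠ 0` and the polynomials `Pₙ` satisfy the recursion
`x·Pₙ = P_{n−1} + Σ_{k=0}^{n} a_k·P_{n+1−k}` (with `P₋₁ = 0`, `P₀ = 1`), then for every
compact `K ⊆ ℝ` there is `r > 0` such that for every `z` with `|z| < r` the series
`Σ Pₙ(x)·zⁿ` converges uniformly in `x ∈ K` to `V(z)/(V(z) + z(z−x))`, where
`V(z) = Σ a_k·z^k`. -/
theorem generating_series_uniform_convergence (a : ℕ → ℝ) (A R : ℝ)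
    (hA : 0 < A) (hR : 0 < R) (ha0 : a 0 ≠ 0)
    (hbound : ∀ k : ℕ, |a k| ≤ A * R ^ k)
    (P : ℕ → Polynomial ℝ) (hP0 : P 0 = 1)
    (hrec : ∀ n : ℕ, Polynomial.X * P n =
      (if n = 0 then 0 else P (n - 1)) +
        ∑ k ∈ Finset.range (n + 1), Polynomial.C (a k) * P (n + 1 - k))
    (K : Set ℝ) (hK : IsCompact K) :
    ∃ r > 0, ∀ z : ℝ, |z| < r →
      TendstoUniformlyOn
        (fun N : ℕ => fun x : ℝ => ∑ n ∈ Finset.range N, (P n).eval x * z ^ n)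
        (fun x : ℝ =>
          (∑' k : ℕ, a k * z ^ k) / ((∑' k : ℕ, a k * z ^ k) + z * (z - x)))
        atTop K := by
  classical
  have ha0' : (0:ℝ) < |a 0| := abs_pos.mpr ha0
  -- bound on the compact set
  obtain ⟨B0, hB0⟩ := hK.isBounded.subset_closedBall 0
  set B : ℝ := max B0 0 with hBdef
  have hBnn : (0:ℝ) ≤ B := le_max_right _ _
  have hB : ∀ x ∈ K, |x| ≤ B := by
    intro x hx
    have h := hB0 hx
    rw [Metric.mem_closedBall, Real.dist_eq, sub_zero] at h
    exact h.trans (le_max_left _ _)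
  -- the growth constant
  set M : ℝ := max 1 (max (2 * R) ((B + 1 + 2 * A * R) / |a 0|)) with hMdef
  have hM1 : (1:ℝ) ≤ M := le_max_left _ _
  have hM0 : (0:ℝ) < M := lt_of_lt_of_le one_pos hM1
  have hMR : 2 * R ≤ M := le_trans (le_max_left _ _) (le_max_right _ _)
  have hMa : B + 1 + 2 * A * R ≤ |a 0| * M := by
    have h : (B + 1 + 2 * A * R) / |a 0| ≤ M :=
      le_trans (le_max_right _ _) (le_max_right _ _)
    rw [div_le_iff₀ ha0'] at h
    linarith
  -- geometric sum bound
  have hgs : ∀ m : ℕ, ∑ k ∈ Finset.range m, (1/2 : ℝ) ^ k ≤ 2 := by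
    intro m
    rw [geom_sum_eq (by norm_num : (1/2:ℝ) ≠ 1)]
    rw [div_le_iff_of_neg (by norm_num : (1/2:ℝ) - 1 < 0)]
    have : (0:ℝ) ≤ (1/2:ℝ) ^ m := by positivity
    linarith
  -- uniform polynomial bound
  have hPM : ∀ n : ℕ, ∀ x ∈ K, |(P n).eval x| ≤ M ^ n := by
    intro n
    induction n using Nat.strong_induction_on with
    | _ n ih =>
      match n with
      | 0 => intro x hx; simp [hP0]
      | Nat.succ m =>
        intro x hx
        have e := congrArg (Polynomial.eval x) (hrec m)
        simp only [Polynomial.eval_mul, Polynomial.eval_X, Polynomial.eval_add,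
          Polynomial.eval_finset_sum, Polynomial.eval_C, apply_ite (Polynomial.eval x),
          Polynomial.eval_zero] at e
        rw [Finset.sum_range_succ'] at e
        simp only [Nat.succ_sub_succ, Nat.sub_zero] at e
        have key : a 0 * (P (m+1)).eval x
            = x * (P m).eval x - (if m = 0 then 0 else (P (m-1)).eval x)
              - ∑ k ∈ Finset.range m, a (k+1) * (P (m-k)).eval x := by
          linarith [e]
        have h1 : |x * (P m).eval x| ≤ B * M ^ m := by
          rw [abs_mul]
          exact mul_le_mul (hB x hx) (ih m (Nat.lt_succ_self m) x hx)
            (abs_nonneg _) hBnn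
        have h2 : |if m = 0 then (0:ℝ) else (P (m-1)).eval x| ≤ M ^ m := by
          rcases Nat.eq_zero_or_pos m with h | h
          · simp [h]
          · rw [if_neg h.ne']
            refine (ih (m-1) (by omega) x hx).trans ?_
            exact pow_le_pow_right₀ hM1 (Nat.sub_le m 1)
        have h3 : |∑ k ∈ Finset.range m, a (k+1) * (P (m-k)).eval x|
            ≤ 2 * A * R * M ^ m := by
          calc |∑ k ∈ Finset.range m, a (k+1) * (P (m-k)).eval x|
              ≤ ∑ k ∈ Finset.range m, |a (k+1) * (P (m-k)).eval x| :=
                Finset.abs_sum_le_sum_abs _ _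
            _ ≤ ∑ k ∈ Finset.range m, (A * R * M ^ m) * (1/2 : ℝ) ^ k := by
                apply Finset.sum_le_sum
                intro k hk
                have hkm : k < m := Finset.mem_range.mp hk
                rw [abs_mul]
                have hb1 : |a (k+1)| ≤ A * R ^ (k+1) := hbound (k+1)
                have hb2 : |(P (m-k)).eval x| ≤ M ^ (m-k) :=
                  ih (m-k) (by omega) x hx
                have step : A * R ^ (k+1) * M ^ (m-k) ≤ A * R * M ^ m * (1/2)^k := by
                  have hRk : R ^ k ≤ (M/2) ^ k :=
                    pow_le_pow_left₀ hR.le (by linarith) k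
                  have hsplit : (M/2 : ℝ) ^ k * M ^ (m-k) = (1/2)^k * M ^ m := by
                    calc (M/2 : ℝ) ^ k * M ^ (m-k)
                        = (1/2)^k * (M ^ k * M ^ (m-k)) := by
                          rw [div_pow, div_pow, one_pow]; ring
                      _ = (1/2)^k * M ^ m := by
                          rw [← pow_add, Nat.add_sub_cancel' hkm.le]
                  calc A * R ^ (k+1) * M ^ (m-k)
                      = A * R * (R ^ k * M ^ (m-k)) := by rw [pow_succ]; ring
                    _ ≤ A * R * ((M/2) ^ k * M ^ (m-k)) := by
                        apply mul_le_mul_of_nonneg_left _ (by positivity)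
                        exact mul_le_mul_of_nonneg_right hRk (by positivity)
                    _ = A * R * M ^ m * (1/2)^k := by rw [hsplit]; ring
                calc |a (k+1)| * |(P (m-k)).eval x|
                    ≤ A * R ^ (k+1) * M ^ (m-k) :=
                      mul_le_mul hb1 hb2 (abs_nonneg _) (by positivity)
                  _ ≤ A * R * M ^ m * (1/2)^k := step
            _ = (A * R * M ^ m) * ∑ k ∈ Finset.range m, (1/2 : ℝ) ^ k := by
                rw [Finset.mul_sum]
            _ ≤ (A * R * M ^ m) * 2 :=
                mul_le_mul_of_nonneg_left (hgs m) (by positivity)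
            _ = 2 * A * R * M ^ m := by ring
        have habs : |a 0| * |(P (m+1)).eval x| ≤ |a 0| * M ^ (m+1) := by
          rw [← abs_mul, key]
          calc |x * (P m).eval x - (if m = 0 then 0 else (P (m-1)).eval x)
                - ∑ k ∈ Finset.range m, a (k+1) * (P (m-k)).eval x|
              ≤ |x * (P m).eval x| + |if m = 0 then (0:ℝ) else (P (m-1)).eval x|
                + |∑ k ∈ Finset.range m, a (k+1) * (P (m-k)).eval x| := by
                have t1 := abs_sub (x * (P m).eval x - (if m = 0 then (0:ℝ) else (P (m-1)).eval x)) (∑ k ∈ Finset.range m, a (k+1) * (P (m-k)).eval x)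
                have t2 := abs_sub (x * (P m).eval x) (if m = 0 then (0:ℝ) else (P (m-1)).eval x)
                linarith
            _ ≤ B * M ^ m + M ^ m + 2 * A * R * M ^ m := by linarith
            _ = (B + 1 + 2 * A * R) * M ^ m := by ring
            _ ≤ (|a 0| * M) * M ^ m :=
                mul_le_mul_of_nonneg_right hMa (by positivity)
            _ = |a 0| * M ^ (m+1) := by rw [pow_succ]; ring
        exact le_of_mul_le_mul_left habs ha0'
  -- choose the radius
  refine ⟨min (min (1/(2*M)) (1/(2*R))) (min (|a 0|/(8*A*R)) (|a 0|/(4*(B+1)))),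
    by positivity, ?_⟩
  intro z hz
  have hr1 : |z| < 1/(2*M) := hz.trans_le (le_trans (min_le_left _ _) (min_le_left _ _))
  have hr2 : |z| < 1/(2*R) := hz.trans_le (le_trans (min_le_left _ _) (min_le_right _ _))
  have hr3 : |z| < |a 0|/(8*A*R) := hz.trans_le (le_trans (min_le_right _ _) (min_le_left _ _))
  have hr4 : |z| < |a 0|/(4*(B+1)) := hz.trans_le (le_trans (min_le_right _ _) (min_le_right _ _))
  have hzn : (0:ℝ) ≤ |z| := abs_nonneg z
  have hz1 : M * |z| ≤ 1/2 := by
    rw [lt_div_iff₀ (by positivity)] at hr1; nlinarith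
  have hz2 : R * |z| ≤ 1/2 := by
    rw [lt_div_iff₀ (by positivity)] at hr2; nlinarith
  have hz3 : A * R * |z| ≤ |a 0|/8 := by
    rw [lt_div_iff₀ (by positivity)] at hr3; nlinarith
  have hz4 : |z| * (B + 1) ≤ |a 0|/4 := by
    rw [lt_div_iff₀ (by positivity)] at hr4; nlinarith
  have hzhalf : |z| ≤ 1 := by nlinarith
  have hRz1 : R * |z| < 1 := by linarith
  -- summability of the coefficient series
  have hfn : Summable fun k : ℕ => ‖a k * z ^ k‖ := by
    apply Summable.of_nonneg_of_le (fun k => norm_nonneg _)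
      (fun k => ?_) (Summable.mul_left A
        (summable_geometric_of_lt_one (by positivity) hRz1))
    rw [Real.norm_eq_abs, abs_mul, abs_pow, mul_pow]
    calc |a k| * |z| ^ k ≤ (A * R ^ k) * |z| ^ k :=
          mul_le_mul_of_nonneg_right (hbound k) (by positivity)
      _ = A * (R ^ k * |z| ^ k) := by ring
  have hvs : Summable fun k : ℕ => a k * z ^ k := hfn.of_norm
  set v : ℝ := ∑' k : ℕ, a k * z ^ k with hvdef
  -- tail estimate for v
  have hvtail : |v - a 0| ≤ |a 0|/4 := by
    have hTn : Summable fun k : ℕ => ‖a (k+1) * z ^ (k+1)‖ :=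
      (summable_nat_add_iff (f := fun k : ℕ => ‖a k * z ^ k‖) 1).2 hfn
    have h0 : v = a 0 + ∑' k : ℕ, a (k+1) * z ^ (k+1) := by
      rw [hvdef, Summable.tsum_eq_zero_add hvs]; simp
    have h1 : |∑' k : ℕ, a (k+1) * z ^ (k+1)| ≤ ∑' k : ℕ, ‖a (k+1) * z ^ (k+1)‖ := by
      rw [← Real.norm_eq_abs]
      exact norm_tsum_le_tsum_norm hTn
    have hgsum : Summable fun k : ℕ => (A*R*|z|) * (R*|z|)^k :=
      Summable.mul_left _ (summable_geometric_of_lt_one (by positivity) hRz1)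
    have h2 : ∑' k : ℕ, ‖a (k+1) * z ^ (k+1)‖ ≤ ∑' k : ℕ, (A*R*|z|) * (R*|z|)^k := by
      apply Summable.tsum_le_tsum _ hTn hgsum
      intro k
      rw [Real.norm_eq_abs, abs_mul, abs_pow]
      calc |a (k+1)| * |z| ^ (k+1) ≤ (A * R ^ (k+1)) * |z| ^ (k+1) :=
            mul_le_mul_of_nonneg_right (hbound (k+1)) (by positivity)
        _ = (A*R*|z|) * (R*|z|)^k := by rw [mul_pow, pow_succ, pow_succ]; ring
    have h3 : ∑' k : ℕ, (A*R*|z|) * (R*|z|)^k = (A*R*|z|) * (1 - R*|z|)⁻¹ := by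
      rw [tsum_mul_left, tsum_geometric_of_lt_one (by positivity) hRz1]
    have h4 : (1 - R*|z|)⁻¹ ≤ 2 := by
      rw [inv_le_comm₀ (by linarith) (by norm_num)]
      linarith
    have h5 : (A*R*|z|) * (1 - R*|z|)⁻¹ ≤ |a 0|/4 := by
      calc (A*R*|z|) * (1 - R*|z|)⁻¹ ≤ (|a 0|/8) * 2 := by
            apply mul_le_mul hz3 h4 (inv_nonneg.mpr (by linarith)) (by positivity)
        _ = |a 0|/4 := by ring
    have : |v - a 0| = |∑' k : ℕ, a (k+1) * z ^ (k+1)| := by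
      rw [h0]; congr 1; ring
    rw [this]
    linarith
  -- denominator bound
  have hden : ∀ x ∈ K, |a 0|/2 ≤ |v + z*(z-x)| := by
    intro x hx
    have hzx : |z*(z-x)| ≤ |a 0|/4 := by
      rw [abs_mul]
      calc |z| * |z - x| ≤ |z| * (|z| + |x|) :=
            mul_le_mul_of_nonneg_left (abs_sub _ _) hzn
        _ ≤ |z| * (1 + B) := by
            apply mul_le_mul_of_nonneg_left _ hzn
            have := hB x hx
            linarith
        _ ≤ |a 0|/4 := by rw [mul_comm (|z|)] at hz4 ⊢; linarith [hz4]
    have key : |a 0| ≤ |v + z*(z-x)| + |v - a 0| + |z*(z-x)| := by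
      have t : a 0 = (v + z*(z-x)) + (a 0 - v) + (-(z*(z-x))) := by ring
      calc |a 0| = |(v + z*(z-x)) + (a 0 - v) + (-(z*(z-x)))| := by rw [← t]
        _ ≤ |(v + z*(z-x)) + (a 0 - v)| + |(-(z*(z-x)))| := abs_add_le _ _
        _ ≤ |v + z*(z-x)| + |a 0 - v| + |(-(z*(z-x)))| := by
            linarith [abs_add_le (v + z*(z-x)) (a 0 - v)]
        _ = |v + z*(z-x)| + |v - a 0| + |z*(z-x)| := by
            rw [abs_neg, abs_sub_comm (a 0) v]
    linarith
  have hdenne : ∀ x ∈ K, v + z*(z-x) ≠ 0 := by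
    intro x hx h
    have := hden x hx
    rw [h, abs_zero] at this
    linarith
  -- uniform convergence to the tsum
  have hu : Summable fun n : ℕ => (1/2 : ℝ) ^ n :=
    summable_geometric_of_lt_one (by norm_num) (by norm_num)
  have hbd : ∀ n : ℕ, ∀ x ∈ K, ‖(P n).eval x * z ^ n‖ ≤ (1/2 : ℝ) ^ n := by
    intro n x hx
    rw [Real.norm_eq_abs, abs_mul, abs_pow]
    calc |(P n).eval x| * |z| ^ n ≤ M ^ n * |z| ^ n :=
          mul_le_mul_of_nonneg_right (hPM n x hx) (by positivity)
      _ = (M * |z|) ^ n := (mul_pow _ _ _).symm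
      _ ≤ (1/2 : ℝ) ^ n := pow_le_pow_left₀ (by positivity) hz1 n
  refine (tendstoUniformlyOn_tsum_nat hu hbd).congr_right ?_
  -- identify the limit
  intro x hx
  have hsgn : Summable fun n : ℕ => ‖(P n).eval x * z ^ n‖ :=
    Summable.of_nonneg_of_le (fun n => norm_nonneg _) (fun n => hbd n x hx) hu
  have hsg : Summable fun n : ℕ => (P n).eval x * z ^ n := hsgn.of_norm
  -- the per-index identity
  have hid : ∀ n : ℕ, (x*z) * ((P n).eval x * z^n)
      = (if n = 0 then 0 else z^2 * ((P (n-1)).eval x * z^(n-1)))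
        + ∑ k ∈ Finset.range (n+1), (a k * z^k) * ((P (n-k+1)).eval x * z^(n-k+1)) := by
    intro n
    have e := congrArg (Polynomial.eval x) (hrec n)
    simp only [Polynomial.eval_mul, Polynomial.eval_X, Polynomial.eval_add,
      Polynomial.eval_finset_sum, Polynomial.eval_C, apply_ite (Polynomial.eval x),
      Polynomial.eval_zero] at e
    calc (x*z) * ((P n).eval x * z^n)
        = (x * (P n).eval x) * z^(n+1) := by rw [pow_succ]; ring
      _ = ((if n = 0 then 0 else (P (n-1)).eval x)
          + ∑ k ∈ Finset.range (n+1), a k * (P (n+1-k)).eval x) * z^(n+1) := by rw [e]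
      _ = (if n = 0 then 0 else (P (n-1)).eval x) * z^(n+1)
          + ∑ k ∈ Finset.range (n+1), (a k * (P (n+1-k)).eval x) * z^(n+1) := by
          rw [add_mul, Finset.sum_mul]
      _ = (if n = 0 then 0 else z^2 * ((P (n-1)).eval x * z^(n-1)))
          + ∑ k ∈ Finset.range (n+1), (a k * z^k) * ((P (n-k+1)).eval x * z^(n-k+1)) := by
          congr 1
          · rcases Nat.eq_zero_or_pos n with h | h
            · simp [h]
            · rw [if_neg h.ne', if_neg h.ne']
              have hp : z^(n+1) = z^2 * z^(n-1) := by
                rw [← pow_add]; congr 1; omega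
              rw [hp]; ring
          · apply Finset.sum_congr rfl
            intro k hk
            have hk' : k ≤ n := Nat.lt_succ_iff.mp (Finset.mem_range.mp hk)
            have h1 : n + 1 - k = n - k + 1 := by omega
            have h2 : z^(n+1) = z^k * z^(n-k+1) := by
              rw [← pow_add]; congr 1; omega
            rw [h1, h2]; ring
  -- summability of the pieces
  have hIte : Summable (fun n : ℕ =>
      if n = 0 then (0:ℝ) else z^2 * ((P (n-1)).eval x * z^(n-1))) := by
    apply (summable_nat_add_iff 1).1
    simpa using hsg.mul_left (z^2)
  have hhn : Summable fun m : ℕ => ‖(P (m+1)).eval x * z ^ (m+1)‖ :=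
    (summable_nat_add_iff (f := fun n : ℕ => ‖(P n).eval x * z ^ n‖) 1).2 hsgn
  have hC : Summable (fun n : ℕ =>
      ∑ k ∈ Finset.range (n+1), (a k * z^k) * ((P (n-k+1)).eval x * z^(n-k+1))) :=
    Summable.of_norm (summable_norm_sum_mul_range_of_summable_norm
      (f := fun k : ℕ => a k * z ^ k)
      (g := fun m : ℕ => (P (m+1)).eval x * z ^ (m+1)) hfn hhn)
  have hprod : (∑' k : ℕ, a k * z ^ k) * (∑' m : ℕ, (P (m+1)).eval x * z^(m+1))
      = ∑' n : ℕ, ∑ k ∈ Finset.range (n+1),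
          (a k * z^k) * ((P (n-k+1)).eval x * z^(n-k+1)) :=
    tsum_mul_tsum_eq_tsum_sum_range_of_summable_norm
      (f := fun k : ℕ => a k * z ^ k)
      (g := fun m : ℕ => (P (m+1)).eval x * z ^ (m+1)) hfn hhn
  set S : ℝ := ∑' n : ℕ, (P n).eval x * z^n with hSdef
  have hshift : ∑' m : ℕ, (P (m+1)).eval x * z^(m+1) = S - 1 := by
    have h := Summable.tsum_eq_zero_add hsg
    rw [← hSdef] at h
    simp only [hP0, Polynomial.eval_one, pow_zero, one_mul] at h
    linarith
  have hIteEq : (∑' n : ℕ, if n = 0 then (0:ℝ)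
      else z^2 * ((P (n-1)).eval x * z^(n-1))) = z^2 * S := by
    rw [Summable.tsum_eq_zero_add hIte]
    simp only [if_pos rfl, Nat.succ_ne_zero, if_false, Nat.add_sub_cancel, zero_add,
      eq_self_iff_true, if_true]
    rw [tsum_mul_left, ← hSdef]
  have heq : (x*z) * S = z^2 * S + v * (S - 1) := by
    calc (x*z) * S = ∑' n : ℕ, (x*z) * ((P n).eval x * z^n) := by
          rw [tsum_mul_left]
      _ = ∑' n : ℕ, ((if n = 0 then (0:ℝ) else z^2 * ((P (n-1)).eval x * z^(n-1)))
          + ∑ k ∈ Finset.range (n+1), (a k * z^k) * ((P (n-k+1)).eval x * z^(n-k+1))) :=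
          tsum_congr hid
      _ = (∑' n : ℕ, if n = 0 then (0:ℝ) else z^2 * ((P (n-1)).eval x * z^(n-1)))
          + ∑' n : ℕ, ∑ k ∈ Finset.range (n+1),
              (a k * z^k) * ((P (n-k+1)).eval x * z^(n-k+1)) := Summable.tsum_add hIte hC
      _ = z^2 * S + v * (S - 1) := by
          rw [← hvdef] at hprod
          rw [hIteEq, ← hprod, hshift]
  show S = v / (v + z*(z-x))
  rw [eq_div_iff (hdenne x hx)]
  linear_combination -heq
end
end

section
/- Let (a_k)_{k≥0} be real numbers with a₀ ≠ 0 and |a_k| ≤ A·R^k for all k ≥ 0 (for some A, R > 0), let V(z) = Σ_{k≥0} a_k·z^k for |z| < 1/R, and let the polynomials {Pₙ} satisfy P₋₁ = 0, P₀ = 1 and x·Pₙ(x) = P_{n−1}(x) + Σ_{k=0}^{n} a_k·P_{n+1−k}(x) for n ≥ 0. If there exists a non-degenerate compactly supported probability measure ν on ℝ with ∫x dν = 0 such that ∫ Pₙ dν = 0 for all n ≥ 1, then a₀ = V(0) > 0 and V is the variance function of the CSK family generated by ν. -/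
open MeasureTheory Filter

noncomputable section

/-- The Cauchy–Stieltjes kernel density `f(x,m) = V(m)/(V(m)+m(m-x))`. -/
def cskKernel (V : ℝ → ℝ) (m x : ℝ) : ℝ := V m / (V m + m * (m - x))

/-- `ν` is a non-degenerate, compactly supported probability measure on `ℝ` with mean `0`. -/
def IsCSKGenerator (ν : Measure ℝ) : Prop :=
  IsProbabilityMeasure ν ∧
  (∃ R : ℝ, ν (Set.Icc (-R) R)ᶜ = 0) ∧
  (∀ a : ℝ, ν ≠ Measure.dirac a) ∧
  (∫ x, x ∂ν) = 0

/-- `V` is the variance function of the CSK family generated by `ν`: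
`V` is real-analytic near `0`, `V 0 > 0`, and for all `m` near `0` the kernel
`f(x,m)` is a.e. nonnegative, integrates to `1`, and has mean `m`. -/
def IsCSKVarianceFun (ν : Measure ℝ) (V : ℝ → ℝ) : Prop :=
  AnalyticAt ℝ V 0 ∧ 0 < V 0 ∧
  ∃ ε > 0, ∀ m : ℝ, |m| < ε →
    (∀ᵐ x ∂ν, 0 ≤ cskKernel V m x) ∧
    (∫ x, cskKernel V m x ∂ν) = 1 ∧
    (∫ x, x * cskKernel V m x ∂ν) = m

/-- The class `𝒱` of variance functions of CSK families generated by
non-degenerate compactly supported probability measures with mean `0` and variance `1`. -/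
def memV (V : ℝ → ℝ) : Prop :=
  ∃ ν : Measure ℝ, IsCSKGenerator ν ∧ (∫ x, x ^ 2 ∂ν) = 1 ∧ IsCSKVarianceFun ν V

/-- The class `𝒱∞`: those `V` such that `m ↦ V (c * m)` is in `𝒱` for every real `c`. -/
def memVinf (V : ℝ → ℝ) : Prop := ∀ c : ℝ, memV (fun m => V (c * m))

/-- A probability measure giving no mass to `{0}ᶜ` is `dirac 0`. -/
lemma aux_eq_dirac_zero (ν : Measure ℝ) [IsProbabilityMeasure ν] (h : ν ({0}ᶜ) = 0) :
    ν = Measure.dirac 0 := by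
  ext s hs
  rw [Measure.dirac_apply' _ hs]
  by_cases h0 : (0:ℝ) ∈ s
  · have hsc : ν sᶜ = 0 := measure_mono_null (by
      intro x hx
      simp only [Set.mem_compl_iff, Set.mem_singleton_iff] at *
      rintro rfl; exact hx h0) h
    have h1 : ν s = 1 := by
      have := measure_add_measure_compl (μ := ν) hs
      rw [hsc, add_zero, measure_univ] at this
      exact this
    simp [h1, Set.indicator_of_mem h0]
  · have h1 : ν s = 0 := measure_mono_null (by
      intro x hx
      simp only [Set.mem_compl_iff, Set.mem_singleton_iff]
      rintro rfl; exact h0 hx) h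
    simp [h1, Set.indicator_of_notMem h0]

lemma aux_summable_half {f : ℕ → ℝ} (C : ℝ) (h : ∀ n, ‖f n‖ ≤ C * (1/2:ℝ)^n) : Summable f :=
  Summable.of_norm_bounded (summable_geometric_two.mul_left C) h

/-- Analyticity of a power series with geometrically bounded coefficients. -/
lemma aux_analyticAt (a : ℕ → ℝ) (A R : ℝ) (hR : 0 < R)
    (hbound : ∀ k : ℕ, |a k| ≤ A * R ^ k) :
    AnalyticAt ℝ (fun z : ℝ => ∑' k : ℕ, a k * z ^ k) 0 := by
  have hsum : (FormalMultilinearSeries.ofScalars ℝ a).sum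
      = fun z : ℝ => ∑' k : ℕ, a k * z ^ k := by
    funext z
    exact tsum_congr fun n => by
      rw [FormalMultilinearSeries.ofScalars_apply_eq, smul_eq_mul]
  have hrad : 0 < (FormalMultilinearSeries.ofScalars ℝ a).radius := by
    have hr : (0:ℝ) < R⁻¹ := by positivity
    refine lt_of_lt_of_le ?_ ((FormalMultilinearSeries.ofScalars ℝ a).le_radius_of_bound A
      (r := ⟨R⁻¹, hr.le⟩) ?_)
    · exact ENNReal.coe_pos.mpr (by exact_mod_cast hr)
    · intro n
      rw [FormalMultilinearSeries.ofScalars_norm]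
      have : ‖a n‖ * (R⁻¹) ^ n ≤ (A * R ^ n) * (R⁻¹)^n := by
        apply mul_le_mul_of_nonneg_right (hbound n) (by positivity)
      calc ‖a n‖ * ((⟨R⁻¹, hr.le⟩ : NNReal) : ℝ) ^ n = ‖a n‖ * (R⁻¹) ^ n := rfl
        _ ≤ (A * R ^ n) * (R⁻¹)^n := this
        _ = A * (R * R⁻¹)^n := by rw [mul_pow]; ring
        _ = A := by rw [mul_inv_cancel₀ hR.ne', one_pow, mul_one]
  have := ((FormalMultilinearSeries.ofScalars ℝ a).hasFPowerSeriesOnBall hrad).analyticAt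
  rwa [hsum] at this

set_option maxHeartbeats 1000000 in
/-- If the polynomials `Pₙ` satisfy the recursion `x·Pₙ = P_{n−1} + Σ_{k=0}^{n} a_k·P_{n+1−k}`
(with `P₋₁ = 0`, `P₀ = 1`, `a₀ ≠ 0`, `|a_k| ≤ A·R^k`) and there is a non-degenerate
compactly supported centered probability measure `ν` with `∫ Pₙ dν = 0` for all `n ≥ 1`,
then `a₀ = V(0) > 0` and `V(z) = Σ a_k·z^k` is the variance function of the CSK family
generated by `ν`. -/
theorem recursion_orthogonality_variance (a : ℕ → ℝ) (A R : ℝ)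
    (hA : 0 < A) (hR : 0 < R) (ha0 : a 0 ≠ 0)
    (hbound : ∀ k : ℕ, |a k| ≤ A * R ^ k)
    (P : ℕ → Polynomial ℝ) (hP0 : P 0 = 1)
    (hrec : ∀ n : ℕ, Polynomial.X * P n =
      (if n = 0 then 0 else P (n - 1)) +
        ∑ k ∈ Finset.range (n + 1), Polynomial.C (a k) * P (n + 1 - k))
    (ν : Measure ℝ) (hν : IsCSKGenerator ν)
    (horth : ∀ n : ℕ, 1 ≤ n → (∫ x, (P n).eval x ∂ν) = 0) :
    0 < a 0 ∧ IsCSKVarianceFun ν (fun z => ∑' k : ℕ, a k * z ^ k) := by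
  obtain ⟨hprob, ⟨R₀, hsupp⟩, hnd, hmean⟩ := hν
  haveI := hprob
  set B : ℝ := max R₀ 1 with hBdef
  have hB1 : (1:ℝ) ≤ B := le_max_right _ _
  have hBpos : (0:ℝ) < B := lt_of_lt_of_le one_pos hB1
  have haeB : ∀ᵐ x ∂ν, |x| ≤ B := by
    have h1 : ∀ᵐ x ∂ν, x ∈ Set.Icc (-R₀) R₀ := by
      rw [ae_iff]
      simpa [Set.compl_def] using hsupp
    filter_upwards [h1] with x hx
    have h2 := hx.1; have h3 := hx.2
    have h4 : R₀ ≤ B := le_max_left _ _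
    rw [abs_le]; constructor <;> linarith
  -- integrability of continuous functions
  have hintC : ∀ f : ℝ → ℝ, Continuous f → Integrable f ν := by
    intro f hf
    obtain ⟨C, hC⟩ := (isCompact_Icc (a := -B) (b := B)).exists_bound_of_continuousOn
      hf.continuousOn
    refine (integrable_const C).mono' hf.aestronglyMeasurable ?_
    filter_upwards [haeB] with x hx
    exact hC x (by rw [Set.mem_Icc]; exact abs_le.mp hx)
  have hintP : ∀ n : ℕ, Integrable (fun x => (P n).eval x) ν :=
    fun n => hintC _ (P n).continuous_aeval
  -- evaluated recursion
  have hrecE : ∀ (n : ℕ) (x : ℝ), x * (P n).eval x =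
      (if n = 0 then 0 else (P (n - 1)).eval x) +
        ∑ k ∈ Finset.range (n + 1), a k * (P (n + 1 - k)).eval x := by
    intro n x
    have h := congrArg (Polynomial.eval x) (hrec n)
    simpa [Polynomial.eval_finset_sum, apply_ite (Polynomial.eval x)] using h
  -- P 1
  have hp1 : ∀ x : ℝ, a 0 * (P 1).eval x = x := by
    intro x
    have h := hrecE 0 x
    simp [hP0, Finset.sum_range_one] at h
    linarith
  -- P 2  :  a0² P2 = x² - a1 x - a0
  have hp2 : ∀ x : ℝ, a 0 ^ 2 * (P 2).eval x = x ^ 2 - a 1 * x - a 0 := by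
    intro x
    have h := hrecE 1 x
    rw [Finset.sum_range_succ, Finset.sum_range_one] at h
    simp [hP0] at h
    have h1 := hp1 x
    linear_combination (-(a 0)) * h + (x - a 1) * h1
  -- variance = a 0
  have hvar : (∫ x, x ^ 2 ∂ν) = a 0 := by
    have hi2 : Integrable (fun x : ℝ => x ^ 2) ν := hintC _ (continuous_pow 2)
    have hiid : Integrable (fun x : ℝ => x) ν := hintC _ continuous_id
    have h1 : (∫ x, a 0 ^ 2 * (P 2).eval x ∂ν) = ∫ x, (x ^ 2 - a 1 * x - a 0) ∂ν :=
      integral_congr_ae (Eventually.of_forall fun x => hp2 x)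
    rw [integral_const_mul, horth 2 (by norm_num), mul_zero] at h1
    have h2 : (∫ x, (x ^ 2 - a 1 * x - a 0) ∂ν)
        = (∫ x, x ^ 2 ∂ν) - a 1 * (∫ x, x ∂ν) - a 0 := by
      rw [integral_sub (f := fun x : ℝ => x ^ 2 - a 1 * x)
          (hintC _ (by continuity)) (integrable_const (a 0)),
        integral_sub hi2 (hiid.const_mul (a 1)), integral_const_mul, integral_const,
        probReal_univ]
      simp
    rw [h2, hmean] at h1
    linarith
  have ha0pos : 0 < a 0 := by
    rcases lt_or_eq_of_le (integral_nonneg (fun x => sq_nonneg x) : 0 ≤ ∫ x, x ^ 2 ∂ν) with h | h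
    · rwa [hvar] at h
    · exfalso
      have hi2 : Integrable (fun x : ℝ => x ^ 2) ν := hintC _ (continuous_pow 2)
      have hz : ∀ᵐ x ∂ν, x = 0 := by
        have := (integral_eq_zero_iff_of_nonneg (fun x => sq_nonneg x) hi2).mp h.symm
        filter_upwards [this] with x hx
        have : x ^ 2 = 0 := hx
        exact pow_eq_zero_iff (n := 2) (by norm_num) |>.mp this
      have h0 : ν ({(0:ℝ)}ᶜ) = 0 := by
        rw [ae_iff] at hz
        simpa [Set.compl_def] using hz
      exact hnd 0 (aux_eq_dirac_zero ν h0)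
  -- growth bound on the polynomials
  set M : ℝ := max (max 1 (2 * R)) ((B + 1 + 2 * A * R) / a 0) with hMdef
  have hM1 : (1:ℝ) ≤ M := le_trans (le_max_left _ _) (le_max_left _ _)
  have hMpos : (0:ℝ) < M := lt_of_lt_of_le one_pos hM1
  have hMR : 2 * R ≤ M := le_trans (le_max_right _ _) (le_max_left _ _)
  have hMa : B + 1 + 2 * A * R ≤ a 0 * M := by
    have : (B + 1 + 2 * A * R) / a 0 ≤ M := le_max_right _ _
    calc B + 1 + 2 * A * R = a 0 * ((B + 1 + 2 * A * R) / a 0) := by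
          field_simp
      _ ≤ a 0 * M := by apply mul_le_mul_of_nonneg_left this ha0pos.le
  have hMP : ∀ n : ℕ, ∀ x : ℝ, |x| ≤ B → |(P n).eval x| ≤ M ^ n := by
    intro n
    induction n using Nat.strong_induction_on with
    | _ n ih =>
      match n with
      | 0 => intro x hx; simp [hP0]
      | (m+1) =>
        intro x hx
        have hre := hrecE m x
        have hsplit : ∑ k ∈ Finset.range (m+1), a k * (P (m+1-k)).eval x
            = (∑ k ∈ Finset.range m, a (k+1) * (P (m-k)).eval x)
              + a 0 * (P (m+1)).eval x := by
          rw [Finset.sum_range_succ']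
          congr 1
          apply Finset.sum_congr rfl
          intro k hk
          rw [Nat.succ_sub_succ]
        rw [hsplit] at hre
        have key : a 0 * (P (m+1)).eval x = x * (P m).eval x
            - (if m = 0 then 0 else (P (m-1)).eval x)
            - ∑ k ∈ Finset.range m, a (k+1) * (P (m-k)).eval x := by linarith
        have h1 : |x * (P m).eval x| ≤ B * M ^ m := by
          rw [abs_mul]
          exact mul_le_mul hx (ih m (Nat.lt_succ_self m) x hx) (abs_nonneg _) hBpos.le
        have h2 : |if m = 0 then 0 else (P (m-1)).eval x| ≤ M ^ m := by
          by_cases hm0 : m = 0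
          · simp [hm0]
          · rw [if_neg hm0]
            calc |(P (m-1)).eval x| ≤ M ^ (m-1) :=
                  ih (m-1) (by omega) x hx
              _ ≤ M ^ m := pow_le_pow_right₀ hM1 (by omega)
        have h3 : |∑ k ∈ Finset.range m, a (k+1) * (P (m-k)).eval x|
            ≤ 2 * A * R * M ^ m := by
          calc |∑ k ∈ Finset.range m, a (k+1) * (P (m-k)).eval x|
              ≤ ∑ k ∈ Finset.range m, |a (k+1) * (P (m-k)).eval x| :=
                Finset.abs_sum_le_sum_abs _ _
            _ ≤ ∑ k ∈ Finset.range m, (A * R * M ^ m) * (1/2:ℝ) ^ k := by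
                apply Finset.sum_le_sum
                intro k hk
                have hkm : k < m := Finset.mem_range.mp hk
                rw [abs_mul]
                have e1 : |a (k+1)| ≤ A * R ^ (k+1) := hbound (k+1)
                have e2 : |(P (m-k)).eval x| ≤ M ^ (m-k) :=
                  ih (m-k) (by omega) x hx
                have e3 : R ^ k ≤ (M * (1/2)) ^ k := by
                  apply pow_le_pow_left₀ hR.le
                  linarith
                have e4 : R ^ (k+1) * M ^ (m-k) ≤ R * (M ^ m * (1/2:ℝ)^k) := by
                  have : (M * (1/2:ℝ)) ^ k * M ^ (m-k) = M ^ m * (1/2:ℝ)^k := by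
                    rw [mul_pow]
                    rw [show M ^ k * (1/2:ℝ)^k * M ^ (m-k)
                        = (M ^ k * M ^ (m-k)) * (1/2:ℝ)^k by ring,
                      ← pow_add]
                    congr 2
                    omega
                  calc R ^ (k+1) * M ^ (m-k) = R * (R ^ k * M ^ (m-k)) := by ring
                    _ ≤ R * ((M * (1/2:ℝ)) ^ k * M ^ (m-k)) := by
                        apply mul_le_mul_of_nonneg_left _ hR.le
                        apply mul_le_mul_of_nonneg_right e3 (by positivity)
                    _ = R * (M ^ m * (1/2:ℝ)^k) := by rw [this]
                calc |a (k+1)| * |(P (m-k)).eval x| ≤ (A * R ^ (k+1)) * M ^ (m-k) := by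
                      apply mul_le_mul e1 e2 (abs_nonneg _) (by positivity)
                  _ = A * (R ^ (k+1) * M ^ (m-k)) := by ring
                  _ ≤ A * (R * (M ^ m * (1/2:ℝ)^k)) := by
                      apply mul_le_mul_of_nonneg_left e4 hA.le
                  _ = (A * R * M ^ m) * (1/2:ℝ) ^ k := by ring
            _ = (A * R * M ^ m) * ∑ k ∈ Finset.range m, (1/2:ℝ) ^ k := by
                rw [Finset.mul_sum]
            _ ≤ (A * R * M ^ m) * 2 := by
                apply mul_le_mul_of_nonneg_left (sum_geometric_two_le m) (by positivity)
            _ = 2 * A * R * M ^ m := by ring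
        have habs : a 0 * |(P (m+1)).eval x| ≤ (B + 1 + 2*A*R) * M ^ m := by
          rw [show a 0 * |(P (m+1)).eval x| = |a 0 * (P (m+1)).eval x| by
            rw [abs_mul, abs_of_pos ha0pos]]
          rw [key]
          calc |x * (P m).eval x - (if m = 0 then 0 else (P (m-1)).eval x)
                - ∑ k ∈ Finset.range m, a (k+1) * (P (m-k)).eval x|
              ≤ |x * (P m).eval x| + |if m = 0 then 0 else (P (m-1)).eval x|
                + |∑ k ∈ Finset.range m, a (k+1) * (P (m-k)).eval x| := by
                exact (abs_sub _ _).trans (by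
                  exact add_le_add (abs_sub _ _) le_rfl)
            _ ≤ B * M ^ m + M ^ m + 2 * A * R * M ^ m := by
                exact add_le_add (add_le_add h1 h2) h3
            _ = (B + 1 + 2*A*R) * M ^ m := by ring
        have : a 0 * |(P (m+1)).eval x| ≤ a 0 * M ^ (m+1) := by
          calc a 0 * |(P (m+1)).eval x| ≤ (B + 1 + 2*A*R) * M ^ m := habs
            _ ≤ (a 0 * M) * M ^ m := by
                apply mul_le_mul_of_nonneg_right hMa (by positivity)
            _ = a 0 * M ^ (m+1) := by rw [pow_succ]; ring
        exact le_of_mul_le_mul_left this ha0pos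
  -- value of V at 0
  have hV0 : (∑' k : ℕ, a k * (0:ℝ) ^ k) = a 0 := by
    rw [tsum_eq_single 0 (fun k hk => by simp [zero_pow hk])]
    simp
  refine ⟨ha0pos, aux_analyticAt a A R hR hbound, ?_, ?_⟩
  · show (0:ℝ) < ∑' k : ℕ, a k * (0:ℝ) ^ k
    rw [hV0]; exact ha0pos
  refine ⟨min (1/(2*M)) (min (1/(2*R)) (min (a 0/(8*A*R)) (min 1 (a 0/(4*(1+B)))))),
    by positivity, fun m hm => ?_⟩
  -- basic bounds on |m|
  have hm1 : |m| < 1/(2*M) := lt_of_lt_of_le hm (min_le_left _ _)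
  have hm2 : |m| < 1/(2*R) := lt_of_lt_of_le hm ((min_le_right _ _).trans (min_le_left _ _))
  have hm3 : |m| < a 0/(8*A*R) := lt_of_lt_of_le hm
    ((min_le_right _ _).trans ((min_le_right _ _).trans (min_le_left _ _)))
  have hm4 : |m| ≤ 1 := le_of_lt (lt_of_lt_of_le hm
    ((min_le_right _ _).trans ((min_le_right _ _).trans
      ((min_le_right _ _).trans (min_le_left _ _)))))
  have hm5 : |m| < a 0/(4*(1+B)) := lt_of_lt_of_le hm
    ((min_le_right _ _).trans ((min_le_right _ _).trans
      ((min_le_right _ _).trans (min_le_right _ _))))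
  have hmabs : (0:ℝ) ≤ |m| := abs_nonneg m
  have hmM : M * |m| ≤ 1/2 := by
    rw [lt_div_iff₀ (by positivity)] at hm1; linarith
  have hmR : R * |m| ≤ 1/2 := by
    rw [lt_div_iff₀ (by positivity)] at hm2; linarith
  have hm8 : 2*A*R*|m| ≤ a 0/4 := by
    rw [lt_div_iff₀ (by positivity)] at hm3; linarith
  have hmB : |m| * (|m| + B) ≤ a 0/4 := by
    rw [lt_div_iff₀ (by positivity)] at hm5
    nlinarith [mul_nonneg hmabs (sub_nonneg.mpr hm4)]
  -- geometric bound on the series terms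
  have hgeo : ∀ n : ℕ, ∀ x : ℝ, |x| ≤ B → ‖(P n).eval x * m ^ n‖ ≤ 1 * (1/2:ℝ)^n := by
    intro n x hx
    rw [Real.norm_eq_abs, abs_mul, abs_pow, one_mul]
    calc |(P n).eval x| * |m|^n ≤ M^n * |m|^n :=
          mul_le_mul_of_nonneg_right (hMP n x hx) (by positivity)
      _ = (M*|m|)^n := by rw [mul_pow]
      _ ≤ (1/2:ℝ)^n := pow_le_pow_left₀ (by positivity) hmM n
  have hsumP : ∀ x : ℝ, |x| ≤ B → Summable (fun n => (P n).eval x * m ^ n) :=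
    fun x hx => aux_summable_half 1 (fun n => hgeo n x hx)
  -- bounds on V m
  have hsa : ∀ k : ℕ, ‖a k * m ^ k‖ ≤ A * (1/2:ℝ)^k := by
    intro k
    rw [Real.norm_eq_abs, abs_mul, abs_pow]
    calc |a k| * |m|^k ≤ (A * R^k) * |m|^k :=
          mul_le_mul_of_nonneg_right (hbound k) (by positivity)
      _ = A * (R*|m|)^k := by rw [mul_pow]; ring
      _ ≤ A * (1/2:ℝ)^k := by
          exact mul_le_mul_of_nonneg_left (pow_le_pow_left₀ (by positivity) hmR k) hA.le
  have hsumA : Summable (fun k => a k * m ^ k) := aux_summable_half A hsa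
  have hVc : |(∑' k : ℕ, a k * m ^ k) - a 0| ≤ a 0 / 4 := by
    have htail : (∑' k : ℕ, a k * m ^ k) = a 0 + ∑' k : ℕ, a (k+1) * m ^ (k+1) := by
      rw [Summable.tsum_eq_zero_add hsumA]; simp
    rw [htail, add_sub_cancel_left]
    have hb : ∀ k : ℕ, ‖a (k+1) * m ^ (k+1)‖ ≤ (A * R * |m|) * (1/2:ℝ)^k := by
      intro k
      rw [Real.norm_eq_abs, abs_mul, abs_pow]
      calc |a (k+1)| * |m| ^ (k+1) ≤ (A * R^(k+1)) * |m|^(k+1) :=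
            mul_le_mul_of_nonneg_right (hbound (k+1)) (by positivity)
        _ = (A * R * |m|) * (R * |m|)^k := by rw [mul_pow]; ring
        _ ≤ (A*R*|m|) * (1/2:ℝ)^k :=
            mul_le_mul_of_nonneg_left (pow_le_pow_left₀ (by positivity) hmR k) (by positivity)
    have hsum2n : Summable (fun k => ‖a (k+1) * m ^ (k+1)‖) :=
      aux_summable_half _ (by intro k; rw [norm_norm]; exact hb k)
    calc |∑' k : ℕ, a (k+1) * m^(k+1)| ≤ ∑' k : ℕ, ‖a (k+1) * m^(k+1)‖ :=
          norm_tsum_le_tsum_norm hsum2n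
      _ ≤ ∑' k : ℕ, (A*R*|m|)*(1/2:ℝ)^k :=
          Summable.tsum_le_tsum hb hsum2n (summable_geometric_two.mul_left _)
      _ = (A*R*|m|) * 2 := by rw [tsum_mul_left, tsum_geometric_two]
      _ ≤ a 0 / 4 := by linarith
  have hVlow : 3/4 * a 0 ≤ ∑' k : ℕ, a k * m ^ k := by
    have := abs_le.mp hVc; linarith [this.1]
  have hVpos : (0:ℝ) < ∑' k : ℕ, a k * m^k := lt_of_lt_of_le (by linarith) hVlow
  have hWpos : ∀ᵐ x ∂ν, 0 < (∑' k : ℕ, a k * m ^ k) + m * (m - x) := by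
    filter_upwards [haeB] with x hx
    have h7 : |m - x| ≤ |m| + |x| := by
      simpa [sub_eq_add_neg] using abs_add_le m (-x)
    have h5 : |m * (m - x)| ≤ |m| * (|m| + B) := by
      rw [abs_mul]
      apply mul_le_mul_of_nonneg_left _ (abs_nonneg m)
      linarith
    have h6 := (abs_le.mp (h5.trans hmB)).1
    linarith
  -- the generating-function identity
  have hkey : ∀ x : ℝ, |x| ≤ B →
      ((∑' k : ℕ, a k * m ^ k) + m * (m - x)) * (∑' n : ℕ, (P n).eval x * m ^ n)
        = ∑' k : ℕ, a k * m ^ k := by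
    intro x hx
    have hg : ∀ j : ℕ, ‖(P (j+1)).eval x * m ^ (j+1)‖ ≤ 1 * (1/2:ℝ)^j := by
      intro j
      calc ‖(P (j+1)).eval x * m^(j+1)‖ ≤ 1*(1/2:ℝ)^(j+1) := hgeo (j+1) x hx
        _ ≤ 1*(1/2:ℝ)^j := by
            rw [one_mul, one_mul]
            exact pow_le_pow_of_le_one (by norm_num) (by norm_num) (by omega)
    have hsumg : Summable (fun j => (P (j+1)).eval x * m ^ (j+1)) := aux_summable_half 1 hg
    have hsumgn : Summable (fun j => ‖(P (j+1)).eval x * m ^ (j+1)‖) :=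
      aux_summable_half 1 (by intro j; rw [norm_norm]; exact hg j)
    have hsan : Summable (fun k => ‖a k * m ^ k‖) :=
      aux_summable_half A (by intro k; rw [norm_norm]; exact hsa k)
    have hcauchy := tsum_mul_tsum_eq_tsum_sum_range_of_summable_norm hsan hsumgn
    have hinner : ∀ n : ℕ,
        ∑ k ∈ Finset.range (n+1), (a k * m ^ k) * ((P (n-k+1)).eval x * m ^ (n-k+1))
        = m ^ (n+1) * (x * (P n).eval x - (if n = 0 then 0 else (P (n-1)).eval x)) := by
      intro n
      have e1 : ∀ k ∈ Finset.range (n+1),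
          (a k * m ^ k) * ((P (n-k+1)).eval x * m ^ (n-k+1))
          = m ^ (n+1) * (a k * (P (n+1-k)).eval x) := by
        intro k hk
        have hk' : k ≤ n := by
          have := Finset.mem_range.mp hk; omega
        have h8 : n - k + 1 = n + 1 - k := by omega
        have h9 : m ^ k * m ^ (n+1-k) = m ^ (n+1) := by
          rw [← pow_add]; congr 1; omega
        rw [h8]
        calc (a k * m^k) * ((P (n+1-k)).eval x * m^(n+1-k))
            = (m^k * m^(n+1-k)) * (a k * (P (n+1-k)).eval x) := by ring
          _ = m^(n+1) * (a k * (P (n+1-k)).eval x) := by rw [h9]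
      rw [Finset.sum_congr rfl e1, ← Finset.mul_sum]
      congr 1
      have h10 := hrecE n x
      linarith
    have hc2 : (∑' k : ℕ, a k * m^k) * (∑' j : ℕ, (P (j+1)).eval x * m^(j+1))
        = ∑' n : ℕ, m^(n+1) * (x * (P n).eval x
            - (if n = 0 then 0 else (P (n-1)).eval x)) := by
      rw [hcauchy]; exact tsum_congr hinner
    -- split off the two pieces
    have hptw : ∀ n : ℕ, m^(n+1) * (x * (P n).eval x
          - (if n = 0 then 0 else (P (n-1)).eval x))
        = (m*x) * ((P n).eval x * m^n)
          - m^(n+1) * (if n = 0 then 0 else (P (n-1)).eval x) := by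
      intro n; ring
    have hs1 : Summable (fun n => (m*x) * ((P n).eval x * m^n)) :=
      (hsumP x hx).mul_left _
    have hs2 : Summable (fun n => m^(n+1) * (if n = 0 then 0 else (P (n-1)).eval x)) := by
      apply aux_summable_half 2
      intro n
      match n with
      | 0 => simp
      | (j+1) =>
        rw [if_neg (by omega), Real.norm_eq_abs, abs_mul, abs_pow]
        simp only [Nat.add_sub_cancel]
        calc |m|^(j+1+1) * |(P j).eval x| ≤ |m|^(j+2) * M^j :=
              mul_le_mul_of_nonneg_left (hMP j x hx) (by positivity)
          _ = (M * |m|) ^ j * (|m| * |m|) := by ring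
          _ ≤ (1/2:ℝ)^j * (1*1) := by
              apply mul_le_mul (pow_le_pow_left₀ (by positivity) hmM j)
                (mul_le_mul hm4 hm4 hmabs (by norm_num)) (by positivity) (by positivity)
          _ = 2 * (1/2:ℝ)^(j+1) := by ring
    have hfin : (∑' k : ℕ, a k * m^k) * (∑' j : ℕ, (P (j+1)).eval x * m^(j+1))
        = (m*x) * (∑' n : ℕ, (P n).eval x * m^n)
          - m^2 * (∑' n : ℕ, (P n).eval x * m^n) := by
      rw [hc2, tsum_congr hptw, Summable.tsum_sub hs1 hs2, tsum_mul_left]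
      congr 1
      rw [Summable.tsum_eq_zero_add hs2]
      have hz0 : (m ^ (0+1) * if (0:ℕ) = 0 then 0 else (P (0-1)).eval x) = 0 := by simp
      rw [hz0, zero_add]
      rw [tsum_congr (fun j => show
          (m^(j+1+1) * if j+1 = 0 then 0 else (P (j+1-1)).eval x)
          = m^2 * ((P j).eval x * m^j) by
        rw [if_neg (Nat.succ_ne_zero j)]
        simp only [Nat.add_sub_cancel]
        ring), tsum_mul_left]
    have hG1 : (∑' n : ℕ, (P n).eval x * m^n)
        = 1 + ∑' j : ℕ, (P (j+1)).eval x * m^(j+1) := by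
      rw [Summable.tsum_eq_zero_add (hsumP x hx)]; simp [hP0]
    linear_combination hfin + (∑' k : ℕ, a k * m ^ k) * hG1
  -- integral interchange machinery
  have hlint : ∀ (C : ℝ) (f : ℕ → ℝ → ℝ), 0 ≤ C →
      (∀ n, ∀ᵐ x ∂ν, ‖f n x‖ ≤ C * (1/2:ℝ)^n) →
      (∑' n : ℕ, ∫⁻ x, ‖f n x‖₊ ∂ν) ≠ ⊤ := by
    intro C f hC hae
    have h1 : ∀ n, (∫⁻ x, (‖f n x‖₊ : ENNReal) ∂ν) ≤ ENNReal.ofReal (C * (1/2:ℝ)^n) := by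
      intro n
      calc ∫⁻ x, (‖f n x‖₊ : ENNReal) ∂ν = ∫⁻ x, ENNReal.ofReal ‖f n x‖ ∂ν := by
            simp_rw [ofReal_norm, enorm_eq_nnnorm]
        _ ≤ ∫⁻ _, ENNReal.ofReal (C * (1/2:ℝ)^n) ∂ν :=
            lintegral_mono_ae ((hae n).mono fun x hx => ENNReal.ofReal_le_ofReal hx)
        _ = ENNReal.ofReal (C * (1/2:ℝ)^n) := by
            rw [lintegral_const, measure_univ, mul_one]
    refine ne_top_of_le_ne_top ?_ (ENNReal.tsum_le_tsum h1)
    have h2 : ∀ n : ℕ, ENNReal.ofReal (C * (1/2:ℝ)^n)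
        = ENNReal.ofReal C * (ENNReal.ofReal (1/2))^n := by
      intro n; rw [ENNReal.ofReal_mul hC, ENNReal.ofReal_pow (by norm_num)]
    rw [tsum_congr h2, ENNReal.tsum_mul_left, ENNReal.tsum_geometric]
    apply ENNReal.mul_ne_top ENNReal.ofReal_ne_top
    have hlt : ENNReal.ofReal (1/2) < 1 := ENNReal.ofReal_lt_one.mpr (by norm_num)
    rw [Ne, ENNReal.inv_eq_top, tsub_eq_zero_iff_le]
    exact not_le.mpr hlt
  have hmeas : ∀ n : ℕ, AEStronglyMeasurable (fun x : ℝ => (P n).eval x * m ^ n) ν :=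
    fun n => ((P n).continuous_aeval.mul continuous_const).aestronglyMeasurable
  have hI0 : (∫ x, (P 0).eval x ∂ν) = 1 := by
    simp [hP0]
  have hGint : (∫ x, (∑' n : ℕ, (P n).eval x * m^n) ∂ν) = 1 := by
    rw [integral_tsum hmeas (hlint 1 _ (by norm_num)
      (fun n => haeB.mono fun x hx => hgeo n x hx))]
    rw [tsum_eq_single 0 (fun n hn => by
      rw [integral_mul_const, horth n (Nat.one_le_iff_ne_zero.mpr hn), zero_mul])]
    rw [integral_mul_const, hI0]; simp
  have hxP : ∀ n : ℕ, (∫ x, x * (P n).eval x ∂ν) = if n = 1 then 1 else 0 := by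
    intro n
    have h1 : (∫ x, x * (P n).eval x ∂ν)
        = ∫ x, ((if n = 0 then 0 else (P (n-1)).eval x)
            + ∑ k ∈ Finset.range (n+1), a k * (P (n+1-k)).eval x) ∂ν :=
      integral_congr_ae (Eventually.of_forall (hrecE n))
    have hi_ite : Integrable (fun x => if n = 0 then 0 else (P (n-1)).eval x) ν := by
      by_cases h : n = 0
      · simp [h]
      · simp only [if_neg h]; exact hintP _
    have hi_sum : Integrable
        (fun x => ∑ k ∈ Finset.range (n+1), a k * (P (n+1-k)).eval x) ν :=
      integrable_finset_sum _ (fun k _ => (hintP _).const_mul _)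
    rw [h1, integral_add hi_ite hi_sum,
      integral_finset_sum _ (fun k _ => (hintP _).const_mul _)]
    rw [Finset.sum_eq_zero (fun k hk => by
      rw [integral_const_mul, horth (n+1-k)
        (by have := Finset.mem_range.mp hk; omega), mul_zero]), add_zero]
    match n with
    | 0 => simp
    | 1 => simpa using hI0
    | (k+2) =>
      simp only [if_neg (by omega : ¬ k+2 = 0), if_neg (by omega : ¬ k+2 = 1),
        Nat.add_sub_cancel]
      exact horth (k+1) (by omega)
  have hxint : (∫ x, x * (∑' n : ℕ, (P n).eval x * m ^ n) ∂ν) = m := by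
    have hmeasx : ∀ n : ℕ, AEStronglyMeasurable
        (fun x : ℝ => x * ((P n).eval x * m ^ n)) ν :=
      fun n => (continuous_id.mul ((P n).continuous_aeval.mul
        continuous_const)).aestronglyMeasurable
    have haex : ∀ n : ℕ, ∀ᵐ x ∂ν, ‖x * ((P n).eval x * m ^ n)‖ ≤ B * (1/2:ℝ)^n := by
      intro n; filter_upwards [haeB] with x hx
      rw [norm_mul]
      calc ‖x‖ * ‖(P n).eval x * m^n‖ ≤ B * (1*(1/2:ℝ)^n) :=
            mul_le_mul hx (hgeo n x hx) (norm_nonneg _) hBpos.le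
        _ = B * (1/2:ℝ)^n := by ring
    have h3 : ∀ x : ℝ, x * (∑' n : ℕ, (P n).eval x * m^n)
        = ∑' n : ℕ, x * ((P n).eval x * m^n) := fun x => (tsum_mul_left).symm
    simp_rw [h3]
    rw [integral_tsum hmeasx (hlint B _ hBpos.le haex)]
    have h4 : ∀ n : ℕ, (∫ x, x * ((P n).eval x * m^n) ∂ν)
        = (if n = 1 then 1 else 0) * m^n := by
      intro n
      rw [show (fun x : ℝ => x * ((P n).eval x * m^n))
          = (fun x : ℝ => (x * (P n).eval x) * m^n) by funext x; ring]
      rw [integral_mul_const, hxP n]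
    rw [tsum_congr h4, tsum_eq_single 1 (fun n hn => by rw [if_neg hn, zero_mul])]
    simp
  -- a.e. identification of the kernel with the generating function
  have hker : ∀ᵐ x ∂ν, cskKernel (fun z : ℝ => ∑' k : ℕ, a k * z^k) m x
      = ∑' n : ℕ, (P n).eval x * m^n := by
    filter_upwards [haeB, hWpos] with x hx hW
    simp only [cskKernel]
    rw [div_eq_iff hW.ne']
    linear_combination -(hkey x hx)
  refine ⟨?_, ?_, ?_⟩
  · filter_upwards [hWpos] with x hW
    simp only [cskKernel]
    exact div_nonneg hVpos.le hW.le
  · rw [integral_congr_ae hker]; exact hGint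
  · rw [integral_congr_ae (hker.mono fun x hx => by rw [hx])]; exact hxint
end
end
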